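/- Let X be a reflexive Banach space, K ⊆ X a norm-closed convex cone with K ∩ (-K) = {0} admitting a strictly positive continuous functional, and C ⊆ X a norm-closed convex cone with -K ⊆ C and C ∩ K = {0}. Then there exists a continuous linear functional ξ ∈ X* with ξ(x) > 0 for all x ∈ K \ {0} and ξ(x) ≤ 0 for all x ∈ C. -/

import Mathlib

open Set Metric NormedSpace

set_option maxHeartbeats 1000000 in
/-- Kreps–Yan theorem for reflexive Banach spaces: Let `X` be a reflexive
Banach space, `K ⊆ X` a norm-closed convex cone with `K ∩ (-K) = {0}` admitting a
strictly positive continuous functional, and `C ⊆ X` a norm-closed convex cone with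
`-K ⊆ C` and `C ∩ K = {0}`.  Then some `ξ ∈ X*` is strictly positive on `K` and
non-positive on `C`. -/
theorem stmt5 {X : Type*} [NormedAddCommGroup X] [NormedSpace ℝ X] [CompleteSpace X]
    (hrefl : Function.Surjective (NormedSpace.inclusionInDoubleDual ℝ X))
    (K : Set X) (hK_closed : IsClosed K) (hK_conv : Convex ℝ K)
    (hK_cone : ∀ (c : ℝ), 0 ≤ c → ∀ x ∈ K, c • x ∈ K)
    (hK_pointed : K ∩ (-K) = {0})
    (η : X →L[ℝ] ℝ) (hη : ∀ x ∈ K, x ≠ 0 → 0 < η x)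
    (C : Set X) (hC_closed : IsClosed C) (hC_conv : Convex ℝ C)
    (hC_cone : ∀ (c : ℝ), 0 ≤ c → ∀ x ∈ C, c • x ∈ C)
    (hKC : ∀ x ∈ K, -x ∈ C)
    (hCK : C ∩ K = {0}) :
    ∃ ξ : X →L[ℝ] ℝ, (∀ x ∈ K, x ≠ 0 → 0 < ξ x) ∧ (∀ x ∈ C, ξ x ≤ 0) := by
  classical
  set J := NormedSpace.inclusionInDoubleDual ℝ X with hJdef
  have h0K : (0 : X) ∈ K := by
    have h : (0 : X) ∈ K ∩ (-K) := by rw [hK_pointed]; exact rfl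
    exact h.1
  have h0C : (0 : X) ∈ C := by simpa using hKC 0 h0K
  -- Separation of a point outside `C` from the closed convex cone `C`.
  have hsep : ∀ x : X, x ∉ C → ∃ f : X →L[ℝ] ℝ, (∀ a ∈ C, f a ≤ 0) ∧ 0 < f x := by
    intro x hx
    obtain ⟨f, u, hfC, hfx⟩ := geometric_hahn_banach_closed_point hC_conv hC_closed hx
    have hu : 0 < u := by simpa using hfC 0 h0C
    refine ⟨f, ?_, hu.trans hfx⟩
    intro a ha
    by_contra h
    push_neg at h
    have hc : (0 : ℝ) ≤ (u + 1) / f a := by positivity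
    have h2 := hfC _ (hC_cone _ hc a ha)
    rw [map_smul, smul_eq_mul, div_mul_cancel₀ _ h.ne'] at h2
    linarith
  -- Any functional nonpositive on `C` is nonnegative on `K` (since `-K ⊆ C`).
  have hKpos : ∀ f : X →L[ℝ] ℝ, (∀ a ∈ C, f a ≤ 0) → ∀ y ∈ K, 0 ≤ f y := by
    intro f hf y hy
    have h := hf (-y) (hKC y hy)
    rw [map_neg] at h
    linarith
  have hKnotC : ∀ x ∈ K, x ≠ 0 → x ∉ C := by
    intro x hxK hx0 hxC
    have h : x ∈ C ∩ K := ⟨hxC, hxK⟩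
    rw [hCK] at h
    exact hx0 h
  have hJnorm : ∀ x : X, ‖J x‖ = ‖x‖ := fun x => (inclusionInDoubleDualLi ℝ).norm_map x
  -- For every `n`, a functional nonpositive on `C` and strictly positive on
  -- `{x ∈ K | ‖x‖ ≤ 1, 1/(n+1) ≤ η x}`.
  have hzeta : ∀ n : ℕ, ∃ ζ : X →L[ℝ] ℝ, (∀ a ∈ C, ζ a ≤ 0) ∧
      (∀ x, x ∈ K → ‖x‖ ≤ 1 → 1 / (n + 1 : ℝ) ≤ η x → 0 < ζ x) := by
    intro n
    set A : Set X := {x | x ∈ K ∧ ‖x‖ ≤ 1 ∧ 1 / (n + 1 : ℝ) ≤ η x} with hA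
    have hApos : ∀ x ∈ A, x ≠ 0 := by
      rintro x ⟨_, _, hx⟩ rfl
      rw [map_zero] at hx
      have : (0 : ℝ) < 1 / (n + 1 : ℝ) := by positivity
      linarith
    have hfs : ∀ x : A, ∃ f : X →L[ℝ] ℝ, (∀ a ∈ C, f a ≤ 0) ∧ 0 < f x := by
      rintro ⟨x, hx⟩
      exact hsep x (hKnotC x hx.1 (hApos x hx))
    choose f hf0 hf1 using hfs
    -- the image of `A` in the weak-star bidual
    set G : Set (X →L[ℝ] ℝ) := {g | ∀ a ∈ K, g a ≤ 1} with hG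
    set T : Set (WeakDual ℝ (StrongDual ℝ X)) :=
      (WeakDual.toStrongDual ⁻¹' closedBall 0 1) ∩
        ({φ | 1 / (n + 1 : ℝ) ≤ φ η} ∩ ⋂ g ∈ G, {φ | φ g ≤ 1}) with hT
    have hTcomp : IsCompact T :=
      (WeakDual.isCompact_closedBall 0 1).inter_right
        (IsClosed.inter (isClosed_le continuous_const (WeakDual.eval_continuous η))
          (isClosed_biInter fun g _ => isClosed_le (WeakDual.eval_continuous g) continuous_const))
    have hST : (fun x : X => StrongDual.toWeakDual (J x)) '' A = T := by
      apply Set.eq_of_subset_of_subset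
      · rintro _ ⟨x, hx, rfl⟩
        refine ⟨?_, ?_, ?_⟩
        · show J x ∈ closedBall 0 1
          rw [mem_closedBall, dist_zero_right (J x), hJnorm]
          exact hx.2.1
        · show 1 / (n + 1 : ℝ) ≤ J x η
          exact hx.2.2
        · refine Set.mem_iInter₂.2 fun g hg => ?_
          show J x g ≤ 1
          exact hg x hx.1
      · rintro φ ⟨hφ1, hφ2, hφ3⟩
        obtain ⟨x, hx⟩ := hrefl (WeakDual.toStrongDual φ)
        have hφeq : ∀ g : StrongDual ℝ X, φ g = g x := by
          intro g
          have h := congrArg (fun ψ : StrongDual ℝ (StrongDual ℝ X) => ψ g) hx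
          exact h.symm
        have hxn : ‖x‖ ≤ 1 := by
          have h := hφ1
          rw [Set.mem_preimage, mem_closedBall, dist_zero_right (WeakDual.toStrongDual φ)] at h
          have h2 : ‖J x‖ = ‖WeakDual.toStrongDual φ‖ := by rw [hx]
          rw [hJnorm] at h2
          rw [h2]; exact h
        have hxη : 1 / (n + 1 : ℝ) ≤ η x := by
          have := hφeq η
          rw [← this]
          exact hφ2
        have hxK : x ∈ K := by
          by_contra hxK
          obtain ⟨g, u, hgK, hgx⟩ := geometric_hahn_banach_closed_point hK_conv hK_closed hxK
          have hu : 0 < u := by simpa using hgK 0 h0K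
          have hgG : (u⁻¹ • g) ∈ G := by
            intro a haK
            have h1 : g a ≤ u := (hgK a haK).le
            have h2 : u⁻¹ * g a ≤ u⁻¹ * u := by
              apply mul_le_mul_of_nonneg_left h1 (inv_pos.2 hu).le
            rw [inv_mul_cancel₀ hu.ne'] at h2
            simpa using h2
          have h1 : φ (u⁻¹ • g) ≤ 1 := Set.mem_iInter₂.1 hφ3 (u⁻¹ • g) hgG
          rw [hφeq] at h1
          have h2 : (u⁻¹ • g) x = u⁻¹ * g x := rfl
          rw [h2] at h1
          have h3 : u⁻¹ * u < u⁻¹ * g x := by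
            apply mul_lt_mul_of_pos_left hgx (inv_pos.2 hu)
          rw [inv_mul_cancel₀ hu.ne'] at h3
          linarith
        refine ⟨x, ⟨hxK, hxn, hxη⟩, ?_⟩
        show StrongDual.toWeakDual (J x) = φ
        rw [hx]
        rfl
    have hcover : T ⊆ ⋃ i : A, {φ : WeakDual ℝ (StrongDual ℝ X) | 0 < φ (f i)} := by
      rw [← hST]
      rintro _ ⟨x, hx, rfl⟩
      refine Set.mem_iUnion.2 ⟨⟨x, hx⟩, ?_⟩
      show (0 : ℝ) < f ⟨x, hx⟩ x
      exact hf1 ⟨x, hx⟩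
    obtain ⟨t, ht⟩ := hTcomp.elim_finite_subcover _
      (fun i => isOpen_lt continuous_const (WeakDual.eval_continuous (f i))) hcover
    refine ⟨∑ i ∈ t, f i, ?_, ?_⟩
    · intro a ha
      rw [ContinuousLinearMap.sum_apply]
      exact Finset.sum_nonpos fun i _ => hf0 i a ha
    · intro x hxK hxn hxη
      have hxA : x ∈ A := ⟨hxK, hxn, hxη⟩
      have hmem : StrongDual.toWeakDual (J x) ∈ T := by
        rw [← hST]; exact Set.mem_image_of_mem _ hxA
      obtain ⟨i, hit, hi⟩ := Set.mem_iUnion₂.1 (ht hmem)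
      have hix : 0 < f i x := hi
      rw [ContinuousLinearMap.sum_apply]
      exact Finset.sum_pos' (fun j _ => hKpos (f j) (hf0 j) x hxK) ⟨i, hit, hix⟩
  choose ζ hζC hζpos using hzeta
  -- Sum up the functionals with geometric weights.
  set w : ℕ → ℝ := fun n => (1 / 2 : ℝ) ^ n * (1 + ‖ζ n‖)⁻¹ with hw
  have hwpos : ∀ n, 0 < w n := by
    intro n
    apply mul_pos (by positivity)
    have : (0:ℝ) < 1 + ‖ζ n‖ := by positivity
    positivity
  have hsum : Summable fun n => w n • ζ n := by
    apply Summable.of_norm_bounded (g := fun n : ℕ => (1 / 2 : ℝ) ^ n) summable_geometric_two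
    intro n
    have h1 : (0:ℝ) < 1 + ‖ζ n‖ := by positivity
    have h2 : (1 + ‖ζ n‖)⁻¹ * ‖ζ n‖ ≤ 1 := by
      rw [inv_mul_le_iff₀ h1]
      nlinarith [norm_nonneg (ζ n)]
    calc ‖w n • ζ n‖ ≤ ‖w n‖ * ‖ζ n‖ := ContinuousLinearMap.opNorm_smul_le _ _
      _ = (1 / 2 : ℝ) ^ n * (1 + ‖ζ n‖)⁻¹ * ‖ζ n‖ := by
          rw [Real.norm_of_nonneg (hwpos n).le]
      _
        = (1 / 2 : ℝ) ^ n * ((1 + ‖ζ n‖)⁻¹ * ‖ζ n‖) := by ring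
      _ ≤ (1 / 2 : ℝ) ^ n * 1 := by
          apply mul_le_mul_of_nonneg_left h2 (by positivity)
      _ = (1 / 2 : ℝ) ^ n := mul_one _
  set ξ : X →L[ℝ] ℝ := ∑' n, w n • ζ n with hξ
  have happly : ∀ x : X, HasSum (fun n => w n * ζ n x) (ξ x) := by
    intro x
    have h := (hsum.hasSum).mapL (ContinuousLinearMap.apply ℝ ℝ x)
    simpa using h
  refine ⟨ξ, ?_, ?_⟩
  · intro x hxK hx0
    have hnx : (0 : ℝ) < ‖x‖ := norm_pos_iff.2 hx0
    set y : X := ‖x‖⁻¹ • x with hy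
    have hyK : y ∈ K := hK_cone _ (inv_pos.2 hnx).le x hxK
    have hyn : ‖y‖ = 1 := by
      rw [hy, norm_smul, norm_inv, norm_norm, inv_mul_cancel₀ hnx.ne']
    have hy0 : y ≠ 0 := by
      intro h
      rw [h, norm_zero] at hyn
      exact one_ne_zero hyn.symm
    have hηy : 0 < η y := hη y hyK hy0
    obtain ⟨n, hn⟩ := exists_nat_one_div_lt hηy
    have hζy : 0 < ζ n y := hζpos n y hyK hyn.le hn.le
    have hterm : 0 < w n * ζ n y := mul_pos (hwpos n) hζy
    have hle : w n * ζ n y ≤ ξ y :=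
      le_hasSum (happly y) n fun m _ =>
        mul_nonneg (hwpos m).le (hKpos (ζ m) (hζC m) y hyK)
    have hξy : 0 < ξ y := hterm.trans_le hle
    have hxy : ξ x = ‖x‖ * ξ y := by
      rw [hy, map_smul, smul_eq_mul, ← mul_assoc, mul_inv_cancel₀ hnx.ne', one_mul]
    rw [hxy]
    exact mul_pos hnx hξy
  · intro a haC
    exact (happly a).nonpos fun m =>
      mul_nonpos_iff.2 (Or.inl ⟨(hwpos m).le, hζC m a haC⟩)
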